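/- Let n ≥ 3 and let S_n be the shell graph on n vertices with apex c. The visibility polynomial of S_n is V(S_n)(x) = (1+x)^{n-1} + x + (n-1)x^2 + (2n-5)x^3. -/

import Mathlib

open SimpleGraph Polynomial

/-- Two vertices `u` and `v` are `X`-visible in `G` if some shortest `u`–`v` path
has no internal vertex in `X`, i.e. its support meets `X` only possibly in `{u, v}`. -/
def XVisible {V : Type*} (G : SimpleGraph V) (X : Set V) (u v : V) : Prop :=
  ∃ p : G.Walk u v, p.IsPath ∧ p.length = G.dist u v ∧
    ∀ w ∈ p.support, w ∈ X → w = u ∨ w = v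

/-- `X` is a mutual-visibility set of `G` if every pair of vertices of `X` is `X`-visible. -/
def MutualVisibilitySet {V : Type*} (G : SimpleGraph V) (X : Set V) : Prop :=
  ∀ u ∈ X, ∀ v ∈ X, XVisible G X u v

open Classical in
/-- The visibility polynomial: `∑ m_k x^k` where `m_k` is the number of
mutual-visibility sets of cardinality `k`. -/
noncomputable def visPoly {V : Type*} [Fintype V] (G : SimpleGraph V) : Polynomial ℕ :=
  ∑ S ∈ Finset.univ.powerset.filter (fun S : Finset V => MutualVisibilitySet G ↑S),
    Polynomial.X ^ S.card

/-- The wheel graph with rim `cycleGraph m` (on `some`-vertices) and hub `none`. -/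
def wheelGraph (m : ℕ) : SimpleGraph (Option (Fin m)) :=
  SimpleGraph.fromRel (fun u v =>
    (u = none ∧ v ≠ none) ∨
    ∃ i j : Fin m, u = some i ∧ v = some j ∧ (SimpleGraph.cycleGraph m).Adj i j)

/-- The shell graph with path `pathGraph m` (on `some`-vertices) and apex `none`. -/
def shellGraph (m : ℕ) : SimpleGraph (Option (Fin m)) :=
  SimpleGraph.fromRel (fun u v =>
    (u = none ∧ v ≠ none) ∨
    ∃ i j : Fin m, u = some i ∧ v = some j ∧ (SimpleGraph.pathGraph m).Adj i j)

/-- The bow graph: apex `none` joined to two disjoint paths of `a` and `b` vertices. -/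
def bowGraph (a b : ℕ) : SimpleGraph (Option (Fin a ⊕ Fin b)) :=
  SimpleGraph.fromRel (fun u v =>
    (u = none ∧ v ≠ none) ∨
    (∃ i j : Fin a, u = some (Sum.inl i) ∧ v = some (Sum.inl j) ∧ (SimpleGraph.pathGraph a).Adj i j) ∨
    (∃ i j : Fin b, u = some (Sum.inr i) ∧ v = some (Sum.inr j) ∧ (SimpleGraph.pathGraph b).Adj i j))

/-- The friendship graph: center `none`; the `i`-th triangle has the two
noncentral vertices `some (i, 0)` and `some (i, 1)`. -/
def friendshipGraph (n : ℕ) : SimpleGraph (Option (Fin n × Fin 2)) :=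
  SimpleGraph.fromRel (fun u v =>
    (u = none ∧ v ≠ none) ∨
    ∃ (i : Fin n) (x y : Fin 2), u = some (i, x) ∧ v = some (i, y) ∧ x ≠ y)

/-- The helm graph: a copy of the wheel (the `Sum.inl`-vertices) together with a
pendant vertex `Sum.inr k` attached to each rim vertex `Sum.inl (some k)`. -/
def helmGraph (m : ℕ) : SimpleGraph (Option (Fin m) ⊕ Fin m) :=
  SimpleGraph.fromRel (fun u v =>
    (∃ x y : Option (Fin m), u = Sum.inl x ∧ v = Sum.inl y ∧ (wheelGraph m).Adj x y) ∨
    (∃ k : Fin m, u = Sum.inl (some k) ∧ v = Sum.inr k))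

/-- `W` is a `c_Q`-visible set: `W ⊆ V \ Q`, every pair of vertices of `W` is
`Q`-visible, and `{u, w}` is `Q`-visible for all `u ∈ Q`, `w ∈ W`. -/
def CQVisible {V : Type*} (G : SimpleGraph V) (Q W : Set V) : Prop :=
  W ⊆ Qᶜ ∧ (∀ u ∈ W, ∀ v ∈ W, XVisible G Q u v) ∧ (∀ u ∈ Q, ∀ w ∈ W, XVisible G Q u w)

/-- An absolute `c_Q`-visible set: a `c_Q`-visible set for which `Q` is moreover a
mutual-visibility set of `G`. -/
def AbsoluteCQVisible {V : Type*} (G : SimpleGraph V) (Q W : Set V) : Prop :=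
  CQVisible G Q W ∧ MutualVisibilitySet G Q

namespace ShellAux

open SimpleGraph Polynomial Finset

variable {m : ℕ}

lemma shell_adj_none {i : Fin m} : (shellGraph m).Adj none (some i) := by
  rw [shellGraph, SimpleGraph.fromRel_adj]
  exact ⟨by simp, Or.inl (Or.inl ⟨rfl, by simp⟩)⟩

lemma shell_adj_some {i j : Fin m} :
    (shellGraph m).Adj (some i) (some j) ↔ ((i : ℕ) + 1 = j ∨ (j : ℕ) + 1 = i) := by
  rw [shellGraph, SimpleGraph.fromRel_adj]
  constructor
  · rintro ⟨hne, (⟨h, -⟩ | ⟨a, b, ha, hb, hab⟩) | (⟨h, -⟩ | ⟨a, b, ha, hb, hab⟩)⟩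
    · exact absurd h (by simp)
    · obtain ⟨rfl⟩ := Option.some_injective _ ha
      obtain ⟨rfl⟩ := Option.some_injective _ hb
      exact (pathGraph_adj.mp hab)
    · exact absurd h (by simp)
    · obtain ⟨rfl⟩ := Option.some_injective _ ha
      obtain ⟨rfl⟩ := Option.some_injective _ hb
      exact (pathGraph_adj.mp hab).symm
  · intro h
    refine ⟨?_, Or.inl (Or.inr ⟨i, j, rfl, rfl, pathGraph_adj.mpr h⟩)⟩
    intro he
    obtain ⟨rfl⟩ := Option.some_injective _ he
    omega

lemma shell_dist_none_some {i : Fin m} : (shellGraph m).dist none (some i) = 1 :=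
  SimpleGraph.dist_eq_one_iff_adj.mpr shell_adj_none

lemma shell_dist_some_some {i j : Fin m} (hne : i ≠ j)
    (hadj : ¬(shellGraph m).Adj (some i) (some j)) :
    (shellGraph m).dist (some i) (some j) = 2 := by
  have hle : (shellGraph m).dist (some i) (some j) ≤ 2 := by
    simpa using SimpleGraph.dist_le
      (Walk.cons shell_adj_none.symm (Walk.cons shell_adj_none Walk.nil) :
        (shellGraph m).Walk (some i) (some j))
  have h1 : (shellGraph m).dist (some i) (some j) ≠ 1 := fun h =>
    hadj (SimpleGraph.dist_eq_one_iff_adj.mp h)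
  have hr : (shellGraph m).Reachable (some i) (some j) :=
    ⟨Walk.cons shell_adj_none.symm (Walk.cons shell_adj_none Walk.nil)⟩
  have h0 : (shellGraph m).dist (some i) (some j) ≠ 0 := fun h =>
    hne (Option.some_injective _ (hr.dist_eq_zero_iff.mp h))
  omega

end ShellAux
namespace ShellAux

open SimpleGraph Polynomial Finset

variable {m : ℕ}

lemma xvis_refl {V : Type*} (G : SimpleGraph V) (X : Set V) (u : V) : XVisible G X u u :=
  ⟨Walk.nil, Walk.IsPath.nil, by simp [SimpleGraph.dist_self],
    by intro w hw _; simp at hw; exact Or.inl hw⟩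

lemma xvis_symm {V : Type*} {G : SimpleGraph V} {X : Set V} {u v : V}
    (h : XVisible G X u v) : XVisible G X v u := by
  obtain ⟨p, hp, hl, hs⟩ := h
  exact ⟨p.reverse, hp.reverse, by simpa [SimpleGraph.dist_comm] using hl,
    fun w hw hwX => (hs w (by simpa using hw) hwX).symm⟩

lemma xvis_of_adj {V : Type*} {G : SimpleGraph V} {X : Set V} {u v : V}
    (h : G.Adj u v) : XVisible G X u v := by
  refine ⟨Walk.cons h Walk.nil, by simp [h.ne], ?_, ?_⟩
  · simp [SimpleGraph.dist_eq_one_iff_adj.mpr h]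
  · intro w hw _
    simp at hw
    tauto

lemma xvis_two {V : Type*} {G : SimpleGraph V} {X : Set V} {u v w : V}
    (h1 : G.Adj u w) (h2 : G.Adj w v) (hd : G.dist u v = 2) (hw : w ∉ X) :
    XVisible G X u v := by
  have huv : u ≠ v := by rintro rfl; simp [SimpleGraph.dist_self] at hd
  refine ⟨Walk.cons h1 (Walk.cons h2 Walk.nil), ?_, by simp [hd], ?_⟩
  · simp [Walk.isPath_def, List.Nodup, h1.ne, h2.ne, huv]
  · intro x hx hxX
    simp at hx
    rcases hx with rfl | rfl | rfl
    · exact Or.inl rfl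
    · exact absurd hxX hw
    · exact Or.inr rfl

lemma walk_two {V : Type*} {G : SimpleGraph V} {u v : V} (p : G.Walk u v)
    (hl : p.length = 2) : ∃ w, G.Adj u w ∧ G.Adj w v ∧ w ∈ p.support := by
  cases p with
  | nil => simp at hl
  | cons h q =>
    cases q with
    | nil => simp at hl
    | cons h' q' =>
      have h0 : q'.length = 0 := by simp only [Walk.length_cons] at hl; omega
      have hv := Walk.eq_of_length_eq_zero h0
      subst hv
      exact ⟨_, h, h', by simp⟩

end ShellAux
namespace ShellAux

open SimpleGraph Polynomial Finset

variable {m : ℕ}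

/-- The condition on a set containing the apex. -/
def Good (m : ℕ) (S : Finset (Option (Fin m))) : Prop :=
  ∀ i j : Fin m, some i ∈ S → some j ∈ S → (i : ℕ) ≤ j →
    ((j : ℕ) ≤ (i : ℕ) + 2 ∧
      ∀ k : Fin m, some k ∈ S → (i : ℕ) < k → (k : ℕ) < j → False)

lemma key {S : Finset (Option (Fin m))}
    (hmv : MutualVisibilitySet (shellGraph m) ↑S) (hn : none ∈ S)
    {i j : Fin m} (hi : some i ∈ S) (hj : some j ∈ S)
    (hij : (i : ℕ) + 2 ≤ j) :
    (j : ℕ) = (i : ℕ) + 2 ∧ ∀ k : Fin m, (k : ℕ) = (i : ℕ) + 1 → some k ∉ S := by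
  have hne : i ≠ j := by intro h; subst h; omega
  have hadj : ¬(shellGraph m).Adj (some i) (some j) := by
    rw [shell_adj_some]; omega
  have hd := shell_dist_some_some hne hadj
  obtain ⟨p, hp, hl, hs⟩ := hmv (some i) (by simpa using hi) (some j) (by simpa using hj)
  rw [hd] at hl
  obtain ⟨w, h1, h2, hsup⟩ := walk_two p hl
  have hwu : w ≠ some i := fun h => h1.ne' h
  have hwv : w ≠ some j := fun h => h2.ne h
  have hwX : w ∉ (↑S : Set (Option (Fin m))) := fun h =>
    (hs w hsup h).elim (fun h' => hwu h') (fun h' => hwv h')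
  match w with
  | none => exact absurd (by simpa using hn) hwX
  | some k =>
    rw [shell_adj_some] at h1 h2
    have hk : (k : ℕ) = (i : ℕ) + 1 ∧ (j : ℕ) = (i : ℕ) + 2 := by omega
    refine ⟨hk.2, fun k' hk' hk'S => ?_⟩
    have : k' = k := Fin.ext (by omega)
    subst this
    exact hwX (by simpa using hk'S)

lemma mv_iff (S : Finset (Option (Fin m))) :
    MutualVisibilitySet (shellGraph m) ↑S ↔ (none ∉ S ∨ Good m S) := by
  constructor
  · intro hmv
    by_cases hn : none ∈ S
    · right
      intro i j hi hj hij
      by_cases h2 : (i : ℕ) + 2 ≤ j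
      · obtain ⟨he, hk⟩ := key hmv hn hi hj h2
        exact ⟨by omega, fun k hkS h1 h2' => hk k (by omega) hkS⟩
      · exact ⟨by omega, fun k hkS h1 h2' => by omega⟩
    · exact Or.inl hn
  · intro h u hu v hv
    by_cases huv : u = v
    · subst huv; exact xvis_refl _ _ _
    · match u, v with
      | none, none => exact absurd rfl huv
      | none, some i => exact xvis_of_adj shell_adj_none
      | some i, none => exact xvis_of_adj shell_adj_none.symm
      | some i, some j =>
        by_cases hadj : (shellGraph m).Adj (some i) (some j)
        · exact xvis_of_adj hadj
        · have hne : i ≠ j := fun h => huv (by rw [h])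
          have hd := shell_dist_some_some hne hadj
          rcases h with hn | hgood
          · exact xvis_two shell_adj_none.symm shell_adj_none hd (by simpa using hn)
          · -- use the middle vertex
            rw [shell_adj_some] at hadj
            have hiS : some i ∈ S := by simpa using hu
            have hjS : some j ∈ S := by simpa using hv
            -- wlog i < j
            rcases Nat.lt_or_ge (i : ℕ) (j : ℕ) with hlt | hge
            · have hle := (hgood i j hiS hjS (le_of_lt hlt)).1
              have hj2 : (j : ℕ) = (i : ℕ) + 2 := by omega
              have hklt : (i : ℕ) + 1 < m := by omega
              have hkS : some (⟨(i : ℕ) + 1, hklt⟩ : Fin m) ∉ S := fun hkS =>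
                (hgood i j hiS hjS (le_of_lt hlt)).2 ⟨(i : ℕ) + 1, hklt⟩ hkS
                  (by show (i : ℕ) < (i : ℕ) + 1; omega)
                  (by show (i : ℕ) + 1 < (j : ℕ); omega)
              exact xvis_two (w := some ⟨(i : ℕ) + 1, hklt⟩)
                (by rw [shell_adj_some]; left; rfl)
                (by rw [shell_adj_some]; left; show (i : ℕ) + 1 + 1 = (j : ℕ); omega)
                hd (by simpa using hkS)
            · have hlt : (j : ℕ) < i := by
                rcases Nat.lt_or_ge (j : ℕ) (i : ℕ) with h' | h'
                · exact h'
                · exact absurd (Fin.ext (by omega)) hne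
              have hle := (hgood j i hjS hiS (le_of_lt hlt)).1
              have hj2 : (i : ℕ) = (j : ℕ) + 2 := by omega
              have hklt : (j : ℕ) + 1 < m := by omega
              have hkS : some (⟨(j : ℕ) + 1, hklt⟩ : Fin m) ∉ S := fun hkS =>
                (hgood j i hjS hiS (le_of_lt hlt)).2 ⟨(j : ℕ) + 1, hklt⟩ hkS
                  (by show (j : ℕ) < (j : ℕ) + 1; omega)
                  (by show (j : ℕ) + 1 < (i : ℕ); omega)
              exact xvis_two (w := some ⟨(j : ℕ) + 1, hklt⟩)
                (by rw [shell_adj_some]; right; show (j : ℕ) + 1 + 1 = (i : ℕ); omega)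
                (by rw [shell_adj_some]; right; rfl)
                hd (by simpa using hkS)

end ShellAux
namespace ShellAux

open SimpleGraph Polynomial Finset

variable {m : ℕ}

/-- Encoding of the mutual-visibility sets containing the apex. -/
def F (m : ℕ) : Option (Fin m) ⊕ (Fin (m - 1) ⊕ Fin (m - 2)) → Finset (Option (Fin m))
  | Sum.inl none => {none}
  | Sum.inl (some i) => {none, some i}
  | Sum.inr (Sum.inl k) =>
      {none, some ⟨k.1, by have := k.isLt; omega⟩, some ⟨k.1 + 1, by have := k.isLt; omega⟩}
  | Sum.inr (Sum.inr k) =>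
      {none, some ⟨k.1, by have := k.isLt; omega⟩, some ⟨k.1 + 2, by have := k.isLt; omega⟩}

lemma F_inj : Function.Injective (F m) := by
  intro a b hab
  rcases a with (_ | i) | (k | k) <;> rcases b with (_ | j) | (l | l) <;>
    simp only [F] at hab <;> (try rw [Finset.ext_iff] at hab)
  · rfl
  · have := (hab (some j)).mpr (by simp); simp at this
  · have := (hab (some ⟨l.1, by have := l.isLt; omega⟩)).mpr (by simp); simp at this
  · have := (hab (some ⟨l.1, by have := l.isLt; omega⟩)).mpr (by simp); simp at this
  · have := (hab (some i)).mp (by simp); simp at this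
  · have := (hab (some i)).mp (by simp); simp at this; subst this; rfl
  · have h1 := (hab (some ⟨l.1, by have := l.isLt; omega⟩)).mpr (by simp)
    have h2 := (hab (some ⟨l.1 + 1, by have := l.isLt; omega⟩)).mpr (by simp)
    simp [Fin.ext_iff] at h1 h2; omega
  · have h1 := (hab (some ⟨l.1, by have := l.isLt; omega⟩)).mpr (by simp)
    have h2 := (hab (some ⟨l.1 + 2, by have := l.isLt; omega⟩)).mpr (by simp)
    simp [Fin.ext_iff] at h1 h2; omega
  · have := (hab (some ⟨k.1, by have := k.isLt; omega⟩)).mp (by simp); simp at this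
  · have h1 := (hab (some ⟨k.1, by have := k.isLt; omega⟩)).mp (by simp)
    have h2 := (hab (some ⟨k.1 + 1, by have := k.isLt; omega⟩)).mp (by simp)
    simp [Fin.ext_iff] at h1 h2; omega
  · have h1 := (hab (some ⟨k.1, by have := k.isLt; omega⟩)).mp (by simp)
    have h2 := (hab (some ⟨k.1 + 1, by have := k.isLt; omega⟩)).mp (by simp)
    simp [Fin.ext_iff] at h1 h2
    have : k = l := Fin.ext (by omega)
    subst this; rfl
  · have h1 := (hab (some ⟨k.1, by have := k.isLt; omega⟩)).mp (by simp)
    have h2 := (hab (some ⟨k.1 + 1, by have := k.isLt; omega⟩)).mp (by simp)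
    simp [Fin.ext_iff] at h1 h2; omega
  · have := (hab (some ⟨k.1, by have := k.isLt; omega⟩)).mp (by simp); simp at this
  · have h1 := (hab (some ⟨k.1, by have := k.isLt; omega⟩)).mp (by simp)
    have h2 := (hab (some ⟨k.1 + 2, by have := k.isLt; omega⟩)).mp (by simp)
    simp [Fin.ext_iff] at h1 h2; omega
  · have h1 := (hab (some ⟨k.1, by have := k.isLt; omega⟩)).mp (by simp)
    have h2 := (hab (some ⟨k.1 + 2, by have := k.isLt; omega⟩)).mp (by simp)
    simp [Fin.ext_iff] at h1 h2; omega
  · have h1 := (hab (some ⟨k.1, by have := k.isLt; omega⟩)).mp (by simp)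
    have h2 := (hab (some ⟨k.1 + 2, by have := k.isLt; omega⟩)).mp (by simp)
    simp [Fin.ext_iff] at h1 h2
    have : k = l := Fin.ext (by omega)
    subst this; rfl

lemma good_F (a : Option (Fin m) ⊕ (Fin (m - 1) ⊕ Fin (m - 2))) : Good m (F m a) := by
  rcases a with (_ | x) | (k | k) <;> intro i j hi hj hij <;>
    simp only [F, Finset.mem_insert, Finset.mem_singleton, Option.some.injEq,
      reduceCtorEq, false_or] at hi hj
  · subst hi; subst hj
    exact ⟨by omega, fun k' hk' h1 h2 => by
      simp only [F, Finset.mem_insert, Finset.mem_singleton, Option.some.injEq,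
        reduceCtorEq, false_or] at hk'
      subst hk'; omega⟩
  · rw [Fin.ext_iff, Fin.ext_iff] at hi hj
    refine ⟨by simp at hi hj; omega, fun k' hk' h1 h2 => ?_⟩
    simp only [F, Finset.mem_insert, Finset.mem_singleton, Option.some.injEq,
      reduceCtorEq, false_or] at hk'
    rw [Fin.ext_iff, Fin.ext_iff] at hk'
    simp at hi hj hk'; omega
  · rw [Fin.ext_iff, Fin.ext_iff] at hi hj
    refine ⟨by simp at hi hj; omega, fun k' hk' h1 h2 => ?_⟩
    simp only [F, Finset.mem_insert, Finset.mem_singleton, Option.some.injEq,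
      reduceCtorEq, false_or] at hk'
    rw [Fin.ext_iff, Fin.ext_iff] at hk'
    simp at hi hj hk'; omega

end ShellAux
namespace ShellAux

open SimpleGraph Polynomial Finset

variable {m : ℕ}

open Classical in
lemma B_eq (hm : 2 ≤ m) :
    ((Finset.univ.powerset.filter
        (fun S : Finset (Option (Fin m)) => MutualVisibilitySet (shellGraph m) ↑S)).filter
      (fun S => none ∈ S)) = Finset.univ.image (F m) := by
  ext S
  simp only [Finset.mem_filter, Finset.mem_powerset, Finset.mem_image, Finset.mem_univ,
    true_and]
  constructor
  · rintro ⟨⟨-, hmv⟩, hn⟩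
    have hgood : Good m S := by
      rcases (mv_iff S).mp hmv with h | h
      · exact absurd hn h
      · exact h
    set S' : Finset (Fin m) := Finset.univ.filter (fun i => some i ∈ S) with hS'
    rcases S'.eq_empty_or_nonempty with hemp | hne
    · refine ⟨Sum.inl none, ?_⟩
      have hmem0 : ∀ c : Fin m, some c ∉ S := by
        intro c hc
        have : c ∈ S' := by simp [hS', hc]
        simp [hemp] at this
      ext o
      rcases o with _ | c
      · simp [F, hn]
      · simp [F, hmem0 c]
    · set a := S'.min' hne with ha
      set b := S'.max' hne with hb
      have haS' : a ∈ S' := S'.min'_mem hne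
      have hbS' : b ∈ S' := S'.max'_mem hne
      have haS : some a ∈ S := by simpa [hS'] using haS'
      have hbS : some b ∈ S := by simpa [hS'] using hbS'
      have hab : (a : ℕ) ≤ b := S'.min'_le b hbS'
      have hG := hgood a b haS hbS hab
      have hmem : ∀ c : Fin m, (some c ∈ S ↔ (c = a ∨ c = b)) := by
        intro c
        constructor
        · intro hc
          have hc' : c ∈ S' := by simp [hS', hc]
          have h1 : (a : ℕ) ≤ c := S'.min'_le c hc'
          have h2 : (c : ℕ) ≤ b := S'.le_max' c hc'
          by_contra hne'
          push_neg at hne'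
          obtain ⟨hca, hcb⟩ := hne'
          rw [← Fin.val_ne_iff] at hca hcb
          exact hG.2 c hc (by omega) (by omega)
        · rintro (rfl | rfl)
          · exact haS
          · exact hbS
      by_cases hab' : (a : ℕ) = b
      · refine ⟨Sum.inl (some a), ?_⟩
        ext o
        rcases o with _ | c
        · simp [F, hn]
        · simp only [F, hmem c, Finset.mem_insert, Finset.mem_singleton, Option.some.injEq,
            reduceCtorEq, false_or, Fin.ext_iff]
          omega
      · have hlt : (a : ℕ) < b := lt_of_le_of_ne hab hab'
        rcases Nat.lt_or_ge ((a : ℕ) + 1) b with h2 | h2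
        · -- b = a + 2
          have hb2 : (b : ℕ) = (a : ℕ) + 2 := by omega
          refine ⟨Sum.inr (Sum.inr ⟨(a : ℕ), by have := b.isLt; omega⟩), ?_⟩
          ext o
          rcases o with _ | c
          · simp [F, hn]
          · simp only [F, hmem c, Finset.mem_insert, Finset.mem_singleton, Option.some.injEq,
              reduceCtorEq, false_or, Fin.ext_iff]
            omega
        · -- b = a + 1
          have hb1 : (b : ℕ) = (a : ℕ) + 1 := by omega
          refine ⟨Sum.inr (Sum.inl ⟨(a : ℕ), by have := b.isLt; omega⟩), ?_⟩
          ext o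
          rcases o with _ | c
          · simp [F, hn]
          · simp only [F, hmem c, Finset.mem_insert, Finset.mem_singleton, Option.some.injEq,
              reduceCtorEq, false_or, Fin.ext_iff]
            omega
  · rintro ⟨a, rfl⟩
    refine ⟨⟨Finset.subset_univ _, (mv_iff _).mpr (Or.inr (good_F a))⟩, ?_⟩
    rcases a with (_ | x) | (k | k) <;> simp [F]

open Classical in
lemma A1_eq :
    ((Finset.univ.powerset.filter
        (fun S : Finset (Option (Fin m)) => MutualVisibilitySet (shellGraph m) ↑S)).filter
      (fun S => ¬none ∈ S)) = (Finset.univ.erase none).powerset := by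
  ext S
  simp only [Finset.mem_filter, Finset.mem_powerset, Finset.subset_erase]
  constructor
  · rintro ⟨⟨hsub, -⟩, hn⟩
    exact ⟨hsub, hn⟩
  · rintro ⟨hsub, hn⟩
    exact ⟨⟨hsub, (mv_iff S).mpr (Or.inl hn)⟩, hn⟩

lemma sum_pow_card {α : Type*} [DecidableEq α] (s : Finset α) :
    ∑ t ∈ s.powerset, (Polynomial.X : Polynomial ℕ) ^ t.card
      = (1 + Polynomial.X) ^ s.card := by
  have h := Finset.prod_add (fun _ : α => (Polynomial.X : Polynomial ℕ)) (fun _ => 1) s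
  simp only [Finset.prod_const, one_pow, mul_one] at h
  rw [add_comm]
  exact h.symm

lemma cardF1 : (F m (Sum.inl none)).card = 1 := rfl

lemma cardF2 (i : Fin m) : (F m (Sum.inl (some i))).card = 2 := by
  simp only [F]
  rw [Finset.card_insert_of_notMem (by simp), Finset.card_singleton]

lemma cardF3l (k : Fin (m - 1)) : (F m (Sum.inr (Sum.inl k))).card = 3 := by
  simp only [F]
  rw [Finset.card_insert_of_notMem (by simp),
    Finset.card_insert_of_notMem
      (by simp only [Finset.mem_singleton, Option.some.injEq, Fin.mk.injEq]; omega),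
    Finset.card_singleton]

lemma cardF3r (k : Fin (m - 2)) : (F m (Sum.inr (Sum.inr k))).card = 3 := by
  simp only [F]
  rw [Finset.card_insert_of_notMem (by simp),
    Finset.card_insert_of_notMem
      (by simp only [Finset.mem_singleton, Option.some.injEq, Fin.mk.injEq]; omega),
    Finset.card_singleton]

end ShellAux

open ShellAux in
theorem visPoly_shell (n : ℕ) (hn : 3 ≤ n) :
    visPoly (shellGraph (n - 1)) =
      (1 + Polynomial.X) ^ (n - 1) + Polynomial.X +
        Polynomial.C (n - 1) * Polynomial.X ^ 2 +
        Polynomial.C (2 * n - 5) * Polynomial.X ^ 3 := by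
  classical
  have hm : 2 ≤ n - 1 := by omega
  rw [visPoly]
  rw [← Finset.sum_filter_add_sum_filter_not
    (Finset.univ.powerset.filter
      (fun S : Finset (Option (Fin (n - 1))) => MutualVisibilitySet (shellGraph (n - 1)) ↑S))
    (fun S => none ∈ S) (fun S => (Polynomial.X : Polynomial ℕ) ^ S.card)]
  rw [B_eq hm, A1_eq]
  rw [Finset.sum_image (fun x _ y _ h => F_inj h)]
  rw [sum_pow_card]
  have hcard : (Finset.univ.erase (none : Option (Fin (n - 1)))).card = n - 1 := by
    rw [Finset.card_erase_of_mem (Finset.mem_univ _), Finset.card_univ]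
    simp
  rw [hcard]
  rw [Fintype.sum_sum_type, Fintype.sum_option, Fintype.sum_sum_type]
  simp only [cardF1, cardF2, cardF3l, cardF3r, Finset.sum_const, Finset.card_univ,
    Fintype.card_fin, pow_one, smul_eq_mul, nsmul_eq_mul]
  have h5 : (2 * n - 5 : ℕ) = (n - 1 - 1) + (n - 1 - 2) := by omega
  rw [h5]
  simp only [map_add, ← Polynomial.C_eq_natCast, Nat.cast_id]
  ring
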